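/- If some set S ⊆ {1,…,C} with |S| = C − A admits a feasible assignment, then the set {A+1, …, C} also admits a feasible assignment. In other words, whenever A chunks must be skipped, it is always feasible to skip exactly the first A chunks. -/

import Mathlib

/-- Cumulative bandwidth of a link up to time `t`: `R(t) = Σ_{j=1}^t B(j)`. -/
noncomputable def cumBW (B : ℕ → ℝ) (t : ℕ) : ℝ := ∑ j ∈ Finset.Icc 1 t, B j

/-- `V(i) = Σ_{u=1}^U ⌊min(η_u, R_u(d(i)))/Y⌋`. -/
noncomputable def Vval (U : ℕ) (Y : ℝ) (d : ℕ → ℕ) (B : Fin U → ℕ → ℝ)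
    (η : Fin U → ℝ) (i : ℕ) : ℕ :=
  ∑ u : Fin U, ⌊min (η u) (cumBW (B u) (d i)) / Y⌋₊

/-- A feasible assignment for a set `S` of chunks: a link choice `ℓ i` and download
amounts `z i j ≥ 0` so that each chunk `i ∈ S` gets its full layer of size `Y` over
link `ℓ i` by its deadline `d i`, respecting per-slot bandwidths and per-link
maximum contributions. -/
def FeasibleAssignment (U : ℕ) (Y : ℝ) (d : ℕ → ℕ) (B : Fin U → ℕ → ℝ)
    (η : Fin U → ℝ) (S : Finset ℕ) : Prop :=
  ∃ (ℓ : ℕ → Fin U) (z : ℕ → ℕ → ℝ),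
    (∀ i ∈ S, ∀ j, 0 ≤ z i j) ∧
    (∀ i ∈ S, ∑ j ∈ Finset.Icc 1 (d i), z i j = Y) ∧
    (∀ i ∈ S, ∀ j, (j < 1 ∨ d i < j) → z i j = 0) ∧
    (∀ u : Fin U, ∀ j, 1 ≤ j →
      ∑ i ∈ S.filter (fun i => ℓ i = u), z i j ≤ B u j) ∧
    (∀ u : Fin U,
      ∑ i ∈ S.filter (fun i => ℓ i = u), ∑ j ∈ Finset.Icc 1 (d i), z i j ≤ η u)

/-- If some feasible set has `C − A` chunks, then skipping exactly the first `A`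
chunks, i.e. `S = {A+1, …, C}`, is also feasible. -/
theorem skip_first_A_feasible
    (C U : ℕ) (hU : 1 ≤ U) (Y : ℝ) (hY : 0 < Y)
    (d : ℕ → ℕ) (hd : Monotone d)
    (B : Fin U → ℕ → ℝ) (hB : ∀ u j, 1 ≤ j → 0 ≤ B u j)
    (η : Fin U → ℝ) (hη : ∀ u, 0 ≤ η u)
    (A : ℕ) (hA : A ≤ C)
    (h : ∃ S, S ⊆ Finset.Icc 1 C ∧ FeasibleAssignment U Y d B η S ∧
      S.card = C - A) :
    FeasibleAssignment U Y d B η (Finset.Icc (A + 1) C) := by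
  obtain ⟨S, hSsub, ⟨ℓ, z, hz0, hzY, hzd, hzB, hzη⟩, hScard⟩ := h
  set T : Finset ℕ := Finset.Icc (A + 1) C with hT
  have hTcard : T.card = C - A := by
    rw [hT, Nat.card_Icc]; omega
  set e := S.orderIsoOfFin hScard with he
  -- bounds on elements of S
  have hSmem : ∀ m ∈ S, 1 ≤ m ∧ m ≤ C := by
    intro m hm
    have := hSsub hm
    simpa [Finset.mem_Icc] using this
  -- key bound: the k-th smallest element of S is at most A+1+k
  have key : ∀ (k : ℕ) (hk : k < C - A), ((e ⟨k, hk⟩ : S) : ℕ) ≤ A + 1 + k := by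
    intro k hk
    set m : ℕ := ((e ⟨k, hk⟩ : S) : ℕ) with hm
    have hmS : m ∈ S := (e ⟨k, hk⟩).2
    obtain ⟨hm1, hmC⟩ := hSmem m hmS
    set f : ℕ → ℕ := fun j => if h : j < C - A then ((e ⟨j, h⟩ : S) : ℕ) else 0 with hf
    have hcard : (Finset.Ico k (C - A)).card ≤ (Finset.Icc m C).card := by
      apply Finset.card_le_card_of_injOn f
      · intro j hj
        rw [Finset.mem_coe, Finset.mem_Ico] at hj
        have hj2 : j < C - A := hj.2
        have hfj : f j = ((e ⟨j, hj2⟩ : S) : ℕ) := by simp [hf, hj2]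
        rw [Finset.mem_coe, Finset.mem_Icc, hfj]
        constructor
        · have : (⟨k, hk⟩ : Fin (C - A)) ≤ ⟨j, hj2⟩ := hj.1
          exact e.monotone this
        · exact (hSmem _ (e ⟨j, hj2⟩).2).2
      · intro a ha b hb hab
        rw [Finset.mem_coe, Finset.mem_Ico] at ha hb
        have ha2 : a < C - A := ha.2
        have hb2 : b < C - A := hb.2
        have : ((e ⟨a, ha2⟩ : S) : ℕ) = ((e ⟨b, hb2⟩ : S) : ℕ) := by
          simpa [hf, ha2, hb2] using hab
        have := e.injective (Subtype.coe_injective this)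
        simpa using congrArg Fin.val this
    rw [Nat.card_Ico, Nat.card_Icc] at hcard
    omega
  -- the reassignment map
  set σ : ℕ → ℕ := fun i => if h : i - (A + 1) < C - A then ((e ⟨i - (A + 1), h⟩ : S) : ℕ) else 0 with hσ
  have hidx : ∀ i ∈ T, i - (A + 1) < C - A := by
    intro i hi
    rw [hT, Finset.mem_Icc] at hi
    omega
  have hσS : ∀ i ∈ T, σ i ∈ S := by
    intro i hi
    simp only [hσ, hidx i hi, dif_pos]
    exact (e ⟨i - (A + 1), hidx i hi⟩).2
  have hσle : ∀ i ∈ T, σ i ≤ i := by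
    intro i hi
    have h1 := hidx i hi
    have h2 := key (i - (A + 1)) h1
    rw [hT, Finset.mem_Icc] at hi
    simp only [hσ, h1, dif_pos]
    omega
  have hdle : ∀ i ∈ T, d (σ i) ≤ d i := fun i hi => hd (hσle i hi)
  have hσinj : Set.InjOn σ T := by
    intro a ha b hb hab
    have ha2 := hidx a ha
    have hb2 := hidx b hb
    have : ((e ⟨a - (A + 1), ha2⟩ : S) : ℕ) = ((e ⟨b - (A + 1), hb2⟩ : S) : ℕ) := by
      simpa [hσ, ha2, hb2] using hab
    have := e.injective (Subtype.coe_injective this)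
    have h3 : a - (A + 1) = b - (A + 1) := by simpa using congrArg Fin.val this
    rw [hT, Finset.mem_coe, Finset.mem_Icc] at ha hb
    omega
  have himg : T.image σ = S := by
    apply Finset.eq_of_subset_of_card_le
    · intro m hm
      rw [Finset.mem_image] at hm
      obtain ⟨i, hi, rfl⟩ := hm
      exact hσS i hi
    · rw [Finset.card_image_of_injOn hσinj, hTcard, hScard]
  -- transfer of sums over filtered sets
  have hsum : ∀ (u : Fin U) (F : ℕ → ℝ),
      ∑ i ∈ T.filter (fun i => ℓ (σ i) = u), F (σ i)
        = ∑ m ∈ S.filter (fun m => ℓ m = u), F m := by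
    intro u F
    apply Finset.sum_bij (fun i _ => σ i)
    · intro a ha
      rw [Finset.mem_filter] at ha ⊢
      exact ⟨hσS a ha.1, ha.2⟩
    · intro a ha b hb hab
      rw [Finset.mem_filter] at ha hb
      exact hσinj ha.1 hb.1 hab
    · intro m hm
      rw [Finset.mem_filter] at hm
      have : m ∈ T.image σ := himg ▸ hm.1
      rw [Finset.mem_image] at this
      obtain ⟨i, hi, rfl⟩ := this
      exact ⟨i, Finset.mem_filter.mpr ⟨hi, hm.2⟩, rfl⟩
    · intro a _; rfl
  -- inner sum rewriting
  have hinner : ∀ i ∈ T, ∑ j ∈ Finset.Icc 1 (d i), z (σ i) j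
      = ∑ j ∈ Finset.Icc 1 (d (σ i)), z (σ i) j := by
    intro i hi
    symm
    apply Finset.sum_subset
    · exact Finset.Icc_subset_Icc_right (hdle i hi)
    · intro j hj hj2
      rw [Finset.mem_Icc] at hj hj2
      apply hzd (σ i) (hσS i hi) j
      right
      omega
  refine ⟨fun i => ℓ (σ i), fun i j => z (σ i) j, ?_, ?_, ?_, ?_, ?_⟩
  · intro i hi j
    exact hz0 (σ i) (hσS i hi) j
  · intro i hi
    rw [hinner i hi]
    exact hzY (σ i) (hσS i hi)
  · intro i hi j hj
    apply hzd (σ i) (hσS i hi) j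
    rcases hj with h1 | h1
    · exact Or.inl h1
    · exact Or.inr (lt_of_le_of_lt (hdle i hi) h1)
  · intro u j hj
    rw [hsum u (fun m => z m j)]
    exact hzB u j hj
  · intro u
    calc ∑ i ∈ T.filter (fun i => ℓ (σ i) = u), ∑ j ∈ Finset.Icc 1 (d i), z (σ i) j
        = ∑ i ∈ T.filter (fun i => ℓ (σ i) = u), ∑ j ∈ Finset.Icc 1 (d (σ i)), z (σ i) j := by
          apply Finset.sum_congr rfl
          intro i hi
          exact hinner i (Finset.mem_filter.mp hi).1
      _ = ∑ m ∈ S.filter (fun m => ℓ m = u), ∑ j ∈ Finset.Icc 1 (d m), z m j :=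
          hsum u (fun m => ∑ j ∈ Finset.Icc 1 (d m), z m j)
      _ ≤ η u := hzη u
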